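/- Let G be a finite group acting on a finite set X. Then the number of bijective G-equivariant maps X → X is given by |Aut_G(X)| = ∏_{[H] ∈ Conj_G(X)} (α_{[H]})! · [N_G(H) : H]^{α_{[H]}}, where the product runs over the conjugacy classes of stabilizer subgroups with a fixed representative H of each class. -/

import Mathlib

/-- The conjugate subgroup `g⁻¹ H g`. -/
def conjSub {G : Type*} [Group G] (g : G) (H : Subgroup G) : Subgroup G :=
  H.map (MulAut.conj g⁻¹).toMonoidHom

/-- `H ~_G K` : `K = g⁻¹ H g` for some `g ∈ G`. -/
def isConjSub {G : Type*} [Group G] (H K : Subgroup G) : Prop :=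
  ∃ g : G, K = conjSub g H

/-- `α_{[H]}` : the number of `G`-orbits contained in the box
`B_{[H]} = {x ∈ X : [G_x] = [H]}`. -/
noncomputable def alpha (G : Type*) [Group G] (X : Type*) [MulAction G X]
    (H : Subgroup G) : ℕ :=
  Nat.card {s : Set X // ∃ x : X, s = MulAction.orbit G x ∧
    isConjSub (MulAction.stabilizer G x) H}

namespace CEA
set_option linter.unusedSectionVars false
open MulAction Function Equiv

variable {G : Type*} [Group G] {X : Type*} [MulAction G X]

lemma mem_conjSub {g n : G} {H : Subgroup G} : n ∈ conjSub g H ↔ g * n * g⁻¹ ∈ H := by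
  rw [conjSub, Subgroup.mem_map_equiv, MulAut.conj_symm_apply, inv_inv]

lemma conjSub_one (H : Subgroup G) : conjSub (1 : G) H = H := by
  ext n; simp [mem_conjSub]

lemma conjSub_conjSub (g g' : G) (H : Subgroup G) :
    conjSub g (conjSub g' H) = conjSub (g' * g) H := by
  ext n; simp [mem_conjSub, mul_assoc]

lemma isConjSub_refl (H : Subgroup G) : isConjSub H H := ⟨1, (conjSub_one H).symm⟩

lemma isConjSub_symm {H K : Subgroup G} (h : isConjSub H K) : isConjSub K H := by
  obtain ⟨g, rfl⟩ := h
  exact ⟨g⁻¹, by rw [conjSub_conjSub, mul_inv_cancel, conjSub_one]⟩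

lemma isConjSub_trans {H K L : Subgroup G} (h : isConjSub H K) (h' : isConjSub K L) :
    isConjSub H L := by
  obtain ⟨g, rfl⟩ := h; obtain ⟨g', rfl⟩ := h'
  exact ⟨g * g', conjSub_conjSub g' g H⟩

lemma conjSub_eq_self_iff {g : G} {H : Subgroup G} : conjSub g H = H ↔ g ∈ (Subgroup.normalizer (H : Set G)) := by
  rw [Subgroup.mem_normalizer_iff]
  constructor
  · intro h n
    conv_lhs => rw [← h]
    rw [mem_conjSub]
  · intro h
    ext n
    rw [mem_conjSub, ← h]

lemma stabilizer_smul' (g : G) (x : X) :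
    stabilizer G (g • x) = conjSub g⁻¹ (stabilizer G x) := by
  rw [stabilizer_smul_eq_stabilizer_map_conj, conjSub, inv_inv]

lemma isConjSub_stabilizer_smul (g : G) (x : X) :
    isConjSub (stabilizer G x) (stabilizer G (g • x)) := ⟨g⁻¹, stabilizer_smul' g x⟩

lemma isConjSub_of_mem_orbit {x y : X} (h : y ∈ orbit G x) :
    isConjSub (stabilizer G x) (stabilizer G y) := by
  obtain ⟨g, rfl⟩ := h
  exact isConjSub_stabilizer_smul g x


lemma stabilizer_apply_eq {σ : X → X} (hb : Function.Bijective σ)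
    (he : ∀ (g : G) z, σ (g • z) = g • σ z) (x : X) :
    stabilizer G (σ x) = stabilizer G x := by
  ext g
  rw [mem_stabilizer_iff, mem_stabilizer_iff, ← he, hb.1.eq_iff]

/-- descent of an equivariant map to the orbit space -/
def mapQ (σ : X → X) (he : ∀ (g : G) z, σ (g • z) = g • σ z) :
    orbitRel.Quotient G X → orbitRel.Quotient G X :=
  Quotient.map' σ (fun a b hab => by
    rw [orbitRel_apply] at *
    obtain ⟨g, rfl⟩ := hab
    rw [he]
    exact mem_orbit _ g)

lemma mapQ_mk (σ : X → X) (he : ∀ (g : G) z, σ (g • z) = g • σ z) (x : X) :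
    mapQ σ he (Quotient.mk'' x) = Quotient.mk'' (σ x) := rfl

lemma mapQ_surjective (σ : X → X) (he : ∀ (g : G) z, σ (g • z) = g • σ z)
    (hs : Function.Surjective σ) : Function.Surjective (mapQ σ he) := by
  intro ω
  induction ω using Quotient.inductionOn' with
  | h y =>
    obtain ⟨x, rfl⟩ := hs y
    exact ⟨Quotient.mk'' x, rfl⟩

lemma mapQ_bijective [Finite X] (σ : X → X) (he : ∀ (g : G) z, σ (g • z) = g • σ z)
    (hb : Function.Bijective σ) : Function.Bijective (mapQ σ he) :=
  (mapQ_surjective σ he hb.2).bijective_of_finite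


/-- The points of the orbit of `y` having stabilizer exactly `H = stab y`,
parametrized by `N(H)/H`. -/
noncomputable def cEquiv (y : X) (H : Subgroup G) (hy : stabilizer G y = H) :
    ((Subgroup.normalizer (H : Set G)) ⧸ H.subgroupOf (Subgroup.normalizer (H : Set G))) ≃
      {z : X // (Quotient.mk'' z : orbitRel.Quotient G X) = Quotient.mk'' y ∧
        stabilizer G z = H} := by
  refine Equiv.ofBijective (fun q => Quotient.liftOn' q
    (fun n => ⟨(n : G) • y, ?_, ?_⟩) ?_) ⟨?_, ?_⟩
  · exact Quotient.sound' (by rw [orbitRel_apply]; exact mem_orbit _ _)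
  · rw [stabilizer_smul', hy, conjSub_eq_self_iff]
    exact inv_mem n.2
  · intro a b hab
    rw [QuotientGroup.leftRel_apply] at hab
    have h1 : ((a⁻¹ * b : (Subgroup.normalizer (H : Set G))) : G) ∈ H := hab
    have h2 : ((a⁻¹ * b : (Subgroup.normalizer (H : Set G))) : G) • y = y :=
      mem_stabilizer_iff.mp (by rw [hy]; exact h1)
    apply Subtype.ext
    show (a : G) • y = (b : G) • y
    have hb : (b : G) = (a : G) * ((a⁻¹ * b : (Subgroup.normalizer (H : Set G))) : G) := by
      push_cast; group
    rw [hb, mul_smul, h2]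
  · intro q q'
    induction q using Quotient.inductionOn' with
    | h a =>
      induction q' using Quotient.inductionOn' with
      | h b =>
        intro hab
        have : (a : G) • y = (b : G) • y := congrArg Subtype.val hab
        apply Quotient.sound'
        rw [QuotientGroup.leftRel_apply]
        have hm : ((a⁻¹ * b : (Subgroup.normalizer (H : Set G))) : G) ∈ stabilizer G y := by
          rw [mem_stabilizer_iff]
          push_cast
          rw [mul_smul, ← this, inv_smul_smul]
        rwa [hy] at hm
  · rintro ⟨z, hz1, hz2⟩
    have hz : z ∈ orbit G y := by rwa [← orbitRel_apply, ← Quotient.eq'']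
    obtain ⟨g, rfl⟩ := hz
    have hg : g ∈ (Subgroup.normalizer (H : Set G)) := by
      rw [stabilizer_smul', hy] at hz2
      rw [← Subgroup.inv_mem_iff]
      exact conjSub_eq_self_iff.mp hz2
    exact ⟨Quotient.mk'' ⟨g, hg⟩, rfl⟩

lemma card_cEquiv (y : X) (H : Subgroup G) (hy : stabilizer G y = H) :
    Nat.card {z : X // (Quotient.mk'' z : orbitRel.Quotient G X) = Quotient.mk'' y ∧
        stabilizer G z = H} = H.relIndex (Subgroup.normalizer (H : Set G)) := by
  rw [← Nat.card_congr (cEquiv y H hy)]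
  rfl


section Heart

variable [Finite X] (R : orbitRel.Quotient G X → X)

/-- fiber-preserving permutations of the orbit space -/
abbrev FP : Type _ := {e : Equiv.Perm (orbitRel.Quotient G X) //
    ∀ ω, stabilizer G (R (e ω)) = stabilizer G (R ω)}

/-- points in the orbit `ω'` whose stabilizer equals that of `R ω` -/
abbrev Cc (ω ω' : orbitRel.Quotient G X) : Type _ :=
  {z : X // (Quotient.mk'' z : orbitRel.Quotient G X) = ω' ∧
    stabilizer G z = stabilizer G (R ω)}

variable (hR : ∀ ω, (Quotient.mk'' (R ω) : orbitRel.Quotient G X) = ω)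

include hR in
omit [Finite X] in
lemma exists_smul_R (x : X) : ∃ g : G, g • R (Quotient.mk'' x) = x := by
  have : x ∈ orbit G (R (Quotient.mk'' x)) := by
    rw [← orbitRel_apply, ← Quotient.eq'']
    exact (hR _).symm
  rwa [mem_orbit_iff] at this

/-- glue a choice of orbit-targets into a global map -/
noncomputable def glue (z : orbitRel.Quotient G X → X) : X → X := fun x =>
  Classical.choose (exists_smul_R R hR x) • z (Quotient.mk'' x)

include hR in
lemma glue_spec (z : orbitRel.Quotient G X → X)
    (hz : ∀ ω, stabilizer G (z ω) = stabilizer G (R ω)) (g : G)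
    (ω : orbitRel.Quotient G X) : glue R hR z (g • R ω) = g • z ω := by
  have hω : (Quotient.mk'' (g • R ω) : orbitRel.Quotient G X) = ω := by
    have h1 : (Quotient.mk'' (g • R ω) : orbitRel.Quotient G X) = Quotient.mk'' (R ω) :=
      Quotient.sound' (by rw [orbitRel_apply]; exact mem_orbit _ _)
    rw [h1, hR]
  have hg' := Classical.choose_spec (exists_smul_R R hR (g • R ω))
  set g' := Classical.choose (exists_smul_R R hR (g • R ω)) with hg'def
  rw [hω] at hg'
  show g' • z (Quotient.mk'' (g • R ω)) = g • z ω
  rw [hω]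
  have hst : (g⁻¹ * g') ∈ stabilizer G (R ω) := by
    rw [mem_stabilizer_iff, mul_smul, hg', inv_smul_eq_iff]
  rw [← hz] at hst
  have : (g⁻¹ * g') • z ω = z ω := hst
  calc g' • z ω = g • ((g⁻¹ * g') • z ω) := by rw [← mul_smul]; group
  _ = g • z ω := by rw [this]

lemma sigma_ext {p q : Σ e : FP R, ∀ ω, Cc R ω (e.1 ω)} (h1 : p.1 = q.1)
    (h2 : ∀ ω, ((p.2 ω).1 : X) = (q.2 ω).1) : p = q := by
  obtain ⟨e1, z1⟩ := p; obtain ⟨e2, z2⟩ := q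
  cases h1
  have : z1 = z2 := funext fun ω => Subtype.ext (h2 ω)
  rw [this]

variable (hτ : ∀ ω ω', isConjSub (stabilizer G (R ω)) (stabilizer G (R ω')) →
    stabilizer G (R ω) = stabilizer G (R ω'))

noncomputable def fwd (σp : {σ : X → X // Function.Bijective σ ∧
    ∀ (g : G) z, σ (g • z) = g • σ z}) : Σ e : FP R, ∀ ω, Cc R ω (e.1 ω) :=
  let σ := σp.1
  let e : Equiv.Perm (orbitRel.Quotient G X) :=
    Equiv.ofBijective _ (mapQ_bijective σ σp.2.2 σp.2.1)
  have hmk : ∀ ω, e ω = Quotient.mk'' (σ (R ω)) := fun ω => by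
    show mapQ σ σp.2.2 ω = _
    conv_lhs => rw [← hR ω]
    rfl
  have hstab : ∀ x, stabilizer G (σ x) = stabilizer G x :=
    stabilizer_apply_eq σp.2.1 σp.2.2
  have hE : ∀ ω, stabilizer G (R (e ω)) = stabilizer G (R ω) := fun ω => by
    have h1 : R (e ω) ∈ orbit G (σ (R ω)) := by
      rw [← orbitRel_apply, ← Quotient.eq'', hR (e ω), hmk ω]
    have h2 := isConjSub_of_mem_orbit h1
    rw [hstab] at h2
    exact (hτ ω (e ω) h2).symm
  ⟨⟨e, hE⟩, fun ω => ⟨σ (R ω), (hmk ω).symm, hstab (R ω)⟩⟩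

noncomputable def bwd (p : Σ e : FP R, ∀ ω, Cc R ω (e.1 ω)) :
    {σ : X → X // Function.Bijective σ ∧ ∀ (g : G) z, σ (g • z) = g • σ z} :=
  let e := p.1.1
  let z : orbitRel.Quotient G X → X := fun ω => (p.2 ω).1
  have hz1 : ∀ ω, (Quotient.mk'' (z ω) : orbitRel.Quotient G X) = e ω :=
    fun ω => (p.2 ω).2.1
  have hz2 : ∀ ω, stabilizer G (z ω) = stabilizer G (R ω) := fun ω => (p.2 ω).2.2
  have W := glue_spec R hR z hz2
  have heq : ∀ (g : G) x, glue R hR z (g • x) = g • glue R hR z x := by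
    intro g x
    obtain ⟨g', hg'⟩ := exists_smul_R R hR x
    rw [← hg', ← mul_smul, W, W, mul_smul]
  have hinj : Function.Injective (glue R hR z) := by
    intro x x' h
    obtain ⟨g, hg⟩ := exists_smul_R R hR x
    obtain ⟨g', hg'⟩ := exists_smul_R R hR x'
    rw [← hg, ← hg', W, W] at h
    have horb : (Quotient.mk'' (z (Quotient.mk'' x)) : orbitRel.Quotient G X) =
        Quotient.mk'' (z (Quotient.mk'' x')) := by
      apply Quotient.sound'
      rw [orbitRel_apply]
      exact mem_orbit_iff.mpr ⟨g⁻¹ * g', by rw [mul_smul, ← h, inv_smul_smul]⟩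
    rw [hz1, hz1] at horb
    have hωeq : (Quotient.mk'' x : orbitRel.Quotient G X) = Quotient.mk'' x' :=
      e.injective horb
    rw [hωeq] at h
    have hst : g⁻¹ * g' ∈ stabilizer G (z (Quotient.mk'' x')) := by
      rw [mem_stabilizer_iff, mul_smul, ← h, inv_smul_smul]
    rw [hz2] at hst
    have h2 : (g⁻¹ * g') • R (Quotient.mk'' x') = R (Quotient.mk'' x') := hst
    have hx : x = g • R (Quotient.mk'' x') := by rw [← hωeq, hg]
    rw [hx]
    conv_lhs => rw [← h2]
    rw [← mul_smul, mul_inv_cancel_left]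
    exact hg'
  ⟨glue R hR z, Finite.injective_iff_bijective.mp hinj, heq⟩

noncomputable def heart :
    {σ : X → X // Function.Bijective σ ∧ ∀ (g : G) z, σ (g • z) = g • σ z} ≃
      Σ e : FP R, ∀ ω, Cc R ω (e.1 ω) where
  toFun := fwd R hR hτ
  invFun := bwd R hR
  left_inv := by
    intro σp
    apply Subtype.ext
    funext x
    show glue R hR (fun ω => σp.1 (R ω)) x = σp.1 x
    obtain ⟨g, hg⟩ := exists_smul_R R hR x
    rw [← hg, glue_spec R hR _ (fun ω => stabilizer_apply_eq σp.2.1 σp.2.2 (R ω)) g,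
      σp.2.2]
  right_inv := by
    intro p
    have hz2 : ∀ ω, stabilizer G ((p.2 ω).1) = stabilizer G (R ω) := fun ω => (p.2 ω).2.2
    have hval : ∀ ω, glue R hR (fun ω' => (p.2 ω').1) (R ω) = (p.2 ω).1 := by
      intro ω
      have h1 := glue_spec R hR (fun ω' => (p.2 ω').1) hz2 1 ω
      rwa [one_smul, one_smul] at h1
    apply sigma_ext
    · apply Subtype.ext
      apply Equiv.ext
      intro ω
      show mapQ (bwd R hR p).1 (bwd R hR p).2.2 ω = p.1.1 ω
      conv_lhs => rw [← hR ω]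
      show Quotient.mk'' (glue R hR (fun ω' => (p.2 ω').1) (R ω)) = p.1.1 ω
      rw [hval ω]
      exact (p.2 ω).2.1
    · intro ω
      show glue R hR (fun ω' => (p.2 ω').1) (R ω) = (p.2 ω).1
      exact hval ω

include hR in
lemma card_Cc (ω ω' : orbitRel.Quotient G X)
    (h : stabilizer G (R ω') = stabilizer G (R ω)) :
    Nat.card (Cc R ω ω') =
      (stabilizer G (R ω)).relIndex (Subgroup.normalizer ((stabilizer G (R ω)) : Set G)) := by
  have hc := card_cEquiv (R ω') (stabilizer G (R ω)) h
  rw [hR ω'] at hc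
  exact hc

/-- orbits with stabilizer of the representative equal to `H`, as sets -/
noncomputable def alphaEquiv (H : Subgroup G)
    (hH : ∀ x : X, isConjSub (stabilizer G x) H →
      stabilizer G (R (Quotient.mk'' x)) = H) :
    {ω : orbitRel.Quotient G X // stabilizer G (R ω) = H} ≃
      {s : Set X // ∃ x : X, s = orbit G x ∧ isConjSub (stabilizer G x) H} := by
  refine Equiv.ofBijective (fun ω => ⟨(ω.1).orbit, R ω.1, ?_, ?_⟩) ⟨?_, ?_⟩
  · have h1 := orbitRel.Quotient.orbit_mk (G := G) (R ω.1)
    rw [hR ω.1] at h1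
    exact h1
  · rw [ω.2]
    exact isConjSub_refl H
  · rintro ⟨ω, hω⟩ ⟨ω', hω'⟩ hh
    have : (ω.orbit : Set X) = ω'.orbit := congrArg Subtype.val hh
    exact Subtype.ext (orbitRel.Quotient.orbit_injective this)
  · rintro ⟨s, x, rfl, hconj⟩
    refine ⟨⟨Quotient.mk'' x, hH x hconj⟩, Subtype.ext ?_⟩
    exact orbitRel.Quotient.orbit_mk x

end Heart

/-- fiber preserving permutations are products of permutations of the fibers -/
def fiberPermEquiv {α β : Type*} (φ : α → β) :
    {e : Equiv.Perm α // ∀ a, φ (e a) = φ a} ≃ ∀ b : β, Equiv.Perm {a // φ a = b} where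
  toFun e b := Equiv.Perm.subtypePerm e.1 (fun a => by
    constructor
    · intro h; exact (e.2 a).symm.trans h
    · intro h; exact (e.2 a).trans h)
  invFun f := ⟨(Equiv.sigmaFiberEquiv φ).symm.trans
      ((Equiv.sigmaCongrRight f).trans (Equiv.sigmaFiberEquiv φ)),
    fun a => (f (φ a) ⟨a, rfl⟩).2⟩
  left_inv e := Subtype.ext (Equiv.ext fun a => rfl)
  right_inv f := by
    funext b
    apply Equiv.ext
    rintro ⟨a, rfl⟩
    rfl

lemma card_perm_finite {α : Type*} [Finite α] :
    Nat.card (Equiv.Perm α) = (Nat.card α).factorial := by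
  have := Fintype.ofFinite α
  classical
  rw [Nat.card_eq_fintype_card, Nat.card_eq_fintype_card, Fintype.card_perm]

end CEA

open MulAction

/-- Let `G` be a finite group acting on a finite set `X`, and let
`reps` be a set of representatives of the classes in `Conj_G(X)`.  Then
`|Aut_G(X)| = ∏_{[H] ∈ Conj_G(X)} (α_{[H]})! · [N_G(H) : H]^{α_{[H]}}`. -/
theorem card_equivariant_aut
    {G : Type*} [Group G] [Finite G] {X : Type*} [MulAction G X] [Finite X]
    (reps : Finset (Subgroup G))
    (hmem : ∀ H ∈ reps, ∃ x : X, MulAction.stabilizer G x = H)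
    (hcover : ∀ x : X, ∃ H ∈ reps, isConjSub (MulAction.stabilizer G x) H)
    (hdistinct : ∀ H ∈ reps, ∀ K ∈ reps, isConjSub H K → H = K) :
    Nat.card {σ : X → X // Function.Bijective σ ∧
        ∀ (g : G) (z : X), σ (g • z) = g • σ z} =
      ∏ H ∈ reps, (alpha G X H).factorial *
        (H.relIndex (Subgroup.normalizer (H : Set G))) ^ alpha G X H := by
  classical
  have hex : ∀ ω : orbitRel.Quotient G X, ∃ y : X,
      (Quotient.mk'' y : orbitRel.Quotient G X) = ω ∧ stabilizer G y ∈ reps := by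
    intro ω
    obtain ⟨H, hH, g, hg⟩ := hcover ω.out
    refine ⟨g⁻¹ • ω.out, ?_, ?_⟩
    · have h1 : (Quotient.mk'' (g⁻¹ • ω.out) : orbitRel.Quotient G X) =
          Quotient.mk'' ω.out :=
        Quotient.sound' (by rw [orbitRel_apply]; exact mem_orbit _ _)
      rw [h1, Quotient.out_eq']
    · rw [CEA.stabilizer_smul', inv_inv, ← hg]
      exact hH
  choose R hR1 hR2 using hex
  have hτ : ∀ ω ω', isConjSub (stabilizer G (R ω)) (stabilizer G (R ω')) →
      stabilizer G (R ω) = stabilizer G (R ω') :=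
    fun ω ω' h => hdistinct _ (hR2 ω) _ (hR2 ω') h
  rw [Nat.card_congr (CEA.heart R hR1 hτ)]
  letI : Fintype X := Fintype.ofFinite X
  letI : Fintype (orbitRel.Quotient G X) := Fintype.ofFinite _
  set m : orbitRel.Quotient G X → ℕ := fun ω =>
    (stabilizer G (R ω)).relIndex (Subgroup.normalizer ((stabilizer G (R ω)) : Set G)) with hm
  have hcard_pi : ∀ e : CEA.FP R, Nat.card (∀ ω, CEA.Cc R ω (e.1 ω)) = ∏ ω, m ω := by
    intro e
    rw [Nat.card_pi]
    exact Finset.prod_congr rfl fun ω _ => CEA.card_Cc R hR1 ω (e.1 ω) (e.2 ω)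
  letI : Fintype (CEA.FP R) := Fintype.ofFinite _
  have hsig : Nat.card (Σ e : CEA.FP R, ∀ ω, CEA.Cc R ω (e.1 ω)) =
      Nat.card (CEA.FP R) * ∏ ω, m ω := by
    letI : ∀ (e : CEA.FP R), Fintype (∀ ω, CEA.Cc R ω (e.1 ω)) :=
      fun e => Fintype.ofFinite _
    rw [Nat.card_eq_fintype_card, Fintype.card_sigma]
    have : ∀ e : CEA.FP R, Fintype.card (∀ ω, CEA.Cc R ω (e.1 ω)) = ∏ ω, m ω :=
      fun e => by rw [← Nat.card_eq_fintype_card]; exact hcard_pi e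
    rw [Finset.sum_congr rfl fun e _ => this e, Finset.sum_const, Finset.card_univ,
      ← Nat.card_eq_fintype_card, smul_eq_mul]
  rw [hsig]
  -- the fiber map
  set φ : orbitRel.Quotient G X → ↥reps := fun ω => ⟨stabilizer G (R ω), hR2 ω⟩ with hφ
  have hfib : ∀ b : ↥reps, Nat.card {ω // φ ω = b} = alpha G X b.1 := by
    intro b
    have hHb : ∀ x : X, isConjSub (stabilizer G x) b.1 →
        stabilizer G (R (Quotient.mk'' x)) = b.1 := by
      intro x hconj
      have horb : R (Quotient.mk'' x) ∈ orbit G x := by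
        rw [← orbitRel_apply, ← Quotient.eq'']
        exact hR1 _
      have h1 := CEA.isConjSub_of_mem_orbit horb
      exact hdistinct _ (hR2 _) _ b.2 (CEA.isConjSub_trans (CEA.isConjSub_symm h1) hconj)
    have e1 : {ω // φ ω = b} ≃ {ω : orbitRel.Quotient G X // stabilizer G (R ω) = b.1} :=
      Equiv.subtypeEquivRight (fun ω => Subtype.ext_iff)
    rw [Nat.card_congr (e1.trans (CEA.alphaEquiv R hR1 b.1 hHb))]
    rfl
  -- card of fiber preserving perms
  have hFP : Nat.card (CEA.FP R) = ∏ b : ↥reps, (alpha G X b.1).factorial := by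
    have e2 : CEA.FP R ≃ ∀ b : ↥reps, Equiv.Perm {ω // φ ω = b} :=
      (Equiv.subtypeEquivRight (fun e => forall_congr' fun ω =>
        ⟨fun h => Subtype.ext h, fun h => congrArg Subtype.val h⟩)).trans
        (CEA.fiberPermEquiv φ)
    rw [Nat.card_congr e2, Nat.card_pi]
    exact Finset.prod_congr rfl fun b _ => by
      rw [CEA.card_perm_finite, hfib b]
  -- regroup the product of relindexes
  set f : ↥reps → ℕ := fun b => (b.1).relIndex (Subgroup.normalizer ((b.1) : Set G)) with hf
  have hM : ∏ ω, m ω = ∏ b : ↥reps, f b ^ alpha G X b.1 := by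
    have h1 : ∏ ω, m ω = ∏ ω, f (φ ω) := rfl
    rw [h1, ← Fintype.prod_fiberwise' φ f]
    refine Finset.prod_congr rfl fun b _ => ?_
    rw [Finset.prod_const, Finset.card_univ, ← Nat.card_eq_fintype_card, hfib b]
  rw [hFP, hM, ← Finset.prod_mul_distrib]
  rw [← Finset.prod_coe_sort reps (fun H => (alpha G X H).factorial *
    (H.relIndex (Subgroup.normalizer (H : Set G))) ^ alpha G X H)]
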